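/- (First alternative auxiliary estimate) Let Φ satisfy the standing assumptions and M > 0, and suppose 0 < k ≤ μ⁻ ≤ M. Then with θ_c := 1/Φ'(Φ⁻¹(c)), there is a constant C = C(Φ,M) > 1 such that θ_{μ⁻}/θ_{2μ⁻} = Φ'(Φ⁻¹(2μ⁻))/Φ'(Φ⁻¹(μ⁻)) ≤ Φ'(2·Φ⁻¹(μ⁻))/Φ'(Φ⁻¹(μ⁻)) ≤ C. -/
import Mathlib

open Set

/-- Auxiliary estimate from the first alternative: with `θ_c := 1/Φ'(Φ⁻¹(c))`,
for `0 < k ≤ μ⁻ ≤ M` one has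
`θ_{μ⁻}/θ_{2μ⁻} = Φ'(Φ⁻¹(2μ⁻))/Φ'(Φ⁻¹(μ⁻)) ≤ Φ'(2Φ⁻¹(μ⁻))/Φ'(Φ⁻¹(μ⁻)) ≤ C`
with a constant `C = C(Φ,M) > 1`. -/
theorem stmt_17 (Φ Φ' Φ'' Ψ : ℝ → ℝ) (C_Φ s₀ M : ℝ)
    (hΦc : ContinuousOn Φ (Set.Ici 0))
    (hΦ'd : ∀ s : ℝ, 0 < s → HasDerivAt Φ (Φ' s) s)
    (hΦ''d : ∀ s : ℝ, 0 < s → HasDerivAt Φ' (Φ'' s) s)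
    (hΦ''c : ContinuousOn Φ'' (Set.Ioi 0))
    (hconv : ConvexOn ℝ (Set.Ici 0) Φ)
    (hΦ0 : Φ 0 = 0)
    (hΦ'pos : ∀ s : ℝ, 0 < s → 0 < Φ' s)
    (hCΦ : 0 < C_Φ) (hs₀ : s₀ ∈ Set.Ioc (0:ℝ) 1)
    (hstruct : ∀ s ∈ Set.Ioc (0:ℝ) s₀, s * Φ'' s ≤ C_Φ * Φ' s)
    (hinv₁ : ∀ s : ℝ, 0 ≤ s → Ψ (Φ s) = s)
    (hinv₂ : ∀ σ : ℝ, 0 ≤ σ → 0 ≤ Ψ σ ∧ Φ (Ψ σ) = σ)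
    (hM : 0 < M) :
    ∃ C : ℝ, 1 < C ∧ ∀ μm k : ℝ, 0 < k → k ≤ μm → μm ≤ M →
      (1 / Φ' (Ψ μm)) / (1 / Φ' (Ψ (2 * μm))) = Φ' (Ψ (2 * μm)) / Φ' (Ψ μm) ∧
      Φ' (Ψ (2 * μm)) / Φ' (Ψ μm) ≤ Φ' (2 * Ψ μm) / Φ' (Ψ μm) ∧
      Φ' (2 * Ψ μm) / Φ' (Ψ μm) ≤ C := by
  obtain ⟨hs₀pos, hs₀le⟩ := hs₀
  have hdΦ : ∀ x : ℝ, 0 < x → deriv Φ x = Φ' x := fun x hx => (hΦ'd x hx).deriv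
  have hΦmono : StrictMonoOn Φ (Set.Ici 0) := by
    apply strictMonoOn_of_deriv_pos (convex_Ici 0) hΦc
    intro x hx
    rw [interior_Ici] at hx
    rw [hdΦ x hx]; exact hΦ'pos x hx
  have hΦ'mono : ∀ x y : ℝ, 0 < x → x ≤ y → Φ' x ≤ Φ' y := by
    intro x y hx hxy
    have hy : 0 < y := lt_of_lt_of_le hx hxy
    have h := ((hconv.subset Set.Ioi_subset_Ici_self (convex_Ioi 0)).monotoneOn_deriv
      (fun z hz => (hΦ'd z hz).differentiableAt)) hx hy hxy
    rwa [hdΦ x hx, hdΦ y hy] at h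
  have hΨpos : ∀ μ : ℝ, 0 < μ → 0 < Ψ μ := by
    intro μ hμ
    rcases lt_or_eq_of_le (hinv₂ μ hμ.le).1 with h | h
    · exact h
    · exfalso
      have h2 := (hinv₂ μ hμ.le).2
      rw [← h, hΦ0] at h2; linarith
  have hΨmono : ∀ μ ν : ℝ, 0 ≤ μ → μ ≤ ν → Ψ μ ≤ Ψ ν := by
    intro μ ν hμ hμν
    by_contra h
    push_neg at h
    have h2 := hΦmono (hinv₂ ν (hμ.trans hμν)).1 (hinv₂ μ hμ).1 h
    rw [(hinv₂ μ hμ).2, (hinv₂ ν (hμ.trans hμν)).2] at h2; linarith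
  have hsup : ∀ s : ℝ, 0 ≤ s → 2 * Φ s ≤ Φ (2 * s) := by
    intro s hs
    have h := hconv.2 (Set.mem_Ici.2 (by linarith : (0:ℝ) ≤ 2*s))
      (Set.mem_Ici.2 le_rfl) (by norm_num : (0:ℝ) ≤ 1/2) (by norm_num : (0:ℝ) ≤ 1/2)
      (by norm_num)
    simp only [smul_eq_mul, hΦ0, mul_zero, add_zero] at h
    have he : (1/2 : ℝ) * (2*s) = s := by ring
    rw [he] at h; linarith
  have hΨsub : ∀ μ : ℝ, 0 < μ → Ψ (2 * μ) ≤ 2 * Ψ μ := by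
    intro μ hμ
    have hΨμ := hΨpos μ hμ
    have h1 : Φ (Ψ (2 * μ)) ≤ Φ (2 * Ψ μ) := by
      rw [(hinv₂ (2*μ) (by linarith)).2]
      have := hsup (Ψ μ) hΨμ.le
      rw [(hinv₂ μ hμ.le).2] at this
      linarith
    have := (hΦmono.le_iff_le (hinv₂ (2*μ) (by linarith)).1
      (Set.mem_Ici.2 (by linarith : (0:ℝ) ≤ 2 * Ψ μ))).mp h1
    exact this
  -- doubling: g s = Φ' s / s ^ C_Φ is antitone on Ioc 0 s₀
  set g : ℝ → ℝ := fun s => Φ' s / s ^ C_Φ with hg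
  have hgd : ∀ x : ℝ, 0 < x → HasDerivAt g
      ((Φ'' x * x ^ C_Φ - Φ' x * (C_Φ * x ^ (C_Φ - 1))) / (x ^ C_Φ)^2) x := by
    intro x hx
    exact (hΦ''d x hx).div (Real.hasDerivAt_rpow_const (Or.inl hx.ne'))
      (Real.rpow_pos_of_pos hx C_Φ).ne'
  have hganti : AntitoneOn g (Set.Ioc 0 s₀) := by
    apply antitoneOn_of_deriv_nonpos (convex_Ioc 0 s₀)
    · apply ContinuousOn.div
      · intro x hx
        exact ((hΦ''d x hx.1).continuousAt).continuousWithinAt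
      · intro x hx
        exact (Real.continuousAt_rpow_const x C_Φ (Or.inl hx.1.ne')).continuousWithinAt
      · intro x hx
        exact (Real.rpow_pos_of_pos hx.1 C_Φ).ne'
    · intro x hx
      rw [interior_Ioc] at hx
      exact (hgd x hx.1).differentiableAt.differentiableWithinAt
    · intro x hx
      rw [interior_Ioc] at hx
      rw [(hgd x hx.1).deriv]
      apply div_nonpos_of_nonpos_of_nonneg _ (sq_nonneg _)
      rw [sub_nonpos]
      have hxp := hx.1
      have hkey := hstruct x ⟨hxp, hx.2.le⟩
      have hpow : (0:ℝ) < x ^ (C_Φ - 1) := Real.rpow_pos_of_pos hxp _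
      have hmul : x ^ (C_Φ - 1) * (x * Φ'' x) ≤ x ^ (C_Φ - 1) * (C_Φ * Φ' x) :=
        mul_le_mul_of_nonneg_left hkey hpow.le
      have hxx : x ^ (C_Φ - 1) * x = x ^ C_Φ := by
        have h := (Real.rpow_add hxp (C_Φ - 1) 1).symm
        rw [Real.rpow_one] at h
        rw [h]
        congr 1
        ring
      calc Φ'' x * x ^ C_Φ = x ^ (C_Φ - 1) * (x * Φ'' x) := by rw [← mul_assoc, hxx]; ring
        _ ≤ x ^ (C_Φ - 1) * (C_Φ * Φ' x) := hmul
        _ = Φ' x * (C_Φ * x ^ (C_Φ - 1)) := by ring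
  have hdouble : ∀ s : ℝ, 0 < s → 2 * s ≤ s₀ → Φ' (2 * s) ≤ 2 ^ C_Φ * Φ' s := by
    intro s hs h2s
    have hs' : s ∈ Set.Ioc (0:ℝ) s₀ := ⟨hs, by linarith⟩
    have h2s' : (2*s) ∈ Set.Ioc (0:ℝ) s₀ := ⟨by linarith, h2s⟩
    have h := hganti hs' h2s' (by linarith)
    simp only [hg] at h
    have hpow2s : (0:ℝ) < (2*s) ^ C_Φ := Real.rpow_pos_of_pos (by linarith) _
    have hpows : (0:ℝ) < s ^ C_Φ := Real.rpow_pos_of_pos hs _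
    rw [div_le_div_iff₀ hpow2s hpows] at h
    have hmr : (2*s) ^ C_Φ = 2 ^ C_Φ * s ^ C_Φ :=
      Real.mul_rpow (by norm_num) hs.le
    rw [hmr, show Φ' s * (2 ^ C_Φ * s ^ C_Φ) = (2 ^ C_Φ * Φ' s) * s ^ C_Φ from by ring] at h
    exact le_of_mul_le_mul_right h hpows
  -- the constant
  have hΨM := hΨpos M hM
  have hA : (1:ℝ) ≤ 2 ^ C_Φ := Real.one_le_rpow (by norm_num) hCΦ.le
  set B : ℝ := Φ' (2 * Ψ M) / Φ' (s₀ / 2) with hB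
  refine ⟨max (2 ^ C_Φ) B + 1, by
    have : (0:ℝ) < 2 ^ C_Φ := Real.rpow_pos_of_pos (by norm_num) _
    have := le_max_left (2 ^ C_Φ) B
    linarith, ?_⟩
  intro μm k hk hkμ hμM
  have hμ : 0 < μm := lt_of_lt_of_le hk hkμ
  set s := Ψ μm with hsdef
  have hs : 0 < s := hΨpos μm hμ
  have hsM : s ≤ Ψ M := hΨmono μm M hμ.le hμM
  have hΨ2pos : 0 < Ψ (2 * μm) := hΨpos _ (by linarith)
  have ha : 0 < Φ' s := hΦ'pos s hs
  have hb : 0 < Φ' (Ψ (2 * μm)) := hΦ'pos _ hΨ2pos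
  refine ⟨?_, ?_, ?_⟩
  · rw [div_div_div_comm, div_one, one_div_div]
  · gcongr
    exact hΦ'mono _ _ hΨ2pos (hΨsub μm hμ)
  · have hratio : Φ' (2 * s) / Φ' s ≤ max (2 ^ C_Φ) B := by
      by_cases hcase : 2 * s ≤ s₀
      · refine le_trans ?_ (le_max_left _ _)
        rw [div_le_iff₀ ha]
        have := hdouble s hs hcase
        linarith [this]
      · refine le_trans ?_ (le_max_right _ _)
        push_neg at hcase
        have h1 : Φ' (2 * s) ≤ Φ' (2 * Ψ M) :=
          hΦ'mono _ _ (by linarith) (by linarith)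
        have h2 : Φ' (s₀ / 2) ≤ Φ' s :=
          hΦ'mono _ _ (by linarith) (by linarith)
        have h3 : 0 < Φ' (s₀ / 2) := hΦ'pos _ (by linarith)
        rw [hB]
        exact div_le_div₀ (hΦ'pos _ (by positivity)).le h1 h3 h2
    linarith [hratio]
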